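/- arXiv:2310.04085 — 3 statements merged into one kernel-verified Lean document; each statement's English description precedes it below -/
import Mathlib

section
/- Let W = diag(V/2, Id/2) be a block-diagonal symmetric 2d×2d matrix where V is an invertible symmetric d×d matrix with exactly one negative eigenvalue, and let L = (L_x,L_v) ∈ ℝ^{2d}. Then W + L Lᵗ is positive definite if and only if -V⁻¹L_x·L_x - |L_v|² > 1/2. -/
open Finset in
set_option maxHeartbeats 1000000 in
lemma diag_key {n : Type*} [Fintype n] [DecidableEq n] (μ ℓ : n → ℝ) (i₀ : n)
    (hneg : μ i₀ < 0) (hpos : ∀ j, j ≠ i₀ → 0 < μ j) :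
    (∀ c : n → ℝ, c ≠ 0 → 0 < (∑ j, μ j * c j ^ 2) / 2 + (∑ j, ℓ j * c j) ^ 2) ↔
      (∑ j, ℓ j ^ 2 / μ j) < -(1/2) := by
  have hμne : ∀ j, μ j ≠ 0 := by
    intro j
    by_cases h : j = i₀
    · subst h; exact hneg.ne
    · exact (hpos j h).ne'
  have hsplit : ∀ f : n → ℝ, ∑ j, f j = f i₀ + ∑ j ∈ univ.erase i₀, f j :=
    fun f => (Finset.add_sum_erase _ f (mem_univ i₀)).symm
  constructor
  · intro hpd
    by_contra hT
    push_neg at hT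
    set T := ∑ j, ℓ j ^ 2 / μ j with hTdef
    by_cases hβ : ℓ i₀ = 0
    · have h := hpd (Pi.single i₀ 1) (by
        intro h0
        have : (Pi.single i₀ 1 : n → ℝ) i₀ = 0 := by rw [h0]; rfl
        simp at this)
      have h1 : ∑ j, μ j * (Pi.single i₀ 1 : n → ℝ) j ^ 2 = μ i₀ := by
        rw [Finset.sum_eq_single i₀]
        · simp
        · intro b _ hb; simp [Pi.single_eq_of_ne hb]
        · simp
      have h2 : ∑ j, ℓ j * (Pi.single i₀ 1 : n → ℝ) j = 0 := by
        rw [Finset.sum_eq_single i₀]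
        · simp [hβ]
        · intro b _ hb; simp [Pi.single_eq_of_ne hb]
        · simp
      rw [h1, h2] at h
      nlinarith
    · set w : n → ℝ := fun j => ℓ j / μ j with hw
      have hQw : ∑ j, μ j * w j ^ 2 = T := by
        apply Finset.sum_congr rfl
        intro j _
        have := hμne j
        field_simp [hw]
        simp only [hw]; field_simp
      have hSw : ∑ j, ℓ j * w j = T := by
        apply Finset.sum_congr rfl
        intro j _
        have := hμne j
        rw [hw]
        field_simp
      by_cases hT0 : T ≤ 0
      · have h := hpd w (by
          intro h0
          have : w i₀ = 0 := by rw [h0]; rfl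
          exact hβ (by simpa [hw, div_eq_zero_iff, hμne i₀] using this))
        rw [hQw, hSw] at h
        nlinarith
      · push_neg at hT0
        have hTplus : 0 < ∑ j ∈ univ.erase i₀, ℓ j ^ 2 / μ j := by
          have h1 : T = ℓ i₀ ^ 2 / μ i₀ + ∑ j ∈ univ.erase i₀, ℓ j ^ 2 / μ j := hsplit _
          have hne : ℓ i₀ ^ 2 / μ i₀ < 0 := div_neg_of_pos_of_neg (by positivity) hneg
          linarith
        obtain ⟨j, hjmem, hj⟩ : ∃ j ∈ univ.erase i₀, 0 < ℓ j ^ 2 / μ j := by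
          by_contra hall
          push_neg at hall
          have : ∑ j ∈ univ.erase i₀, ℓ j ^ 2 / μ j ≤ 0 := Finset.sum_nonpos hall
          linarith
        have hℓj : ℓ j ≠ 0 := by
          intro h0; rw [h0] at hj; simp at hj
        set c : n → ℝ := Function.update w i₀ (w i₀ - T / ℓ i₀) with hc
        have hcE : ∀ k ∈ univ.erase i₀, c k = w k := by
          intro k hk
          exact Function.update_of_ne (Finset.mem_erase.mp hk).1 _ _
        have hcne : c ≠ 0 := by
          intro h0
          have h1 : c j = 0 := by rw [h0]; rfl
          rw [hcE j hjmem] at h1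
          exact hℓj (by simpa [hw, div_eq_zero_iff, hμne j] using h1)
        have h := hpd c hcne
        have hci : c i₀ = w i₀ - T / ℓ i₀ := Function.update_self _ _ _
        have hQc : ∑ k, μ k * c k ^ 2
            = T + (μ i₀ * (w i₀ - T / ℓ i₀) ^ 2 - μ i₀ * w i₀ ^ 2) := by
          rw [hsplit (fun k => μ k * c k ^ 2)]
          have e1 : ∑ k ∈ univ.erase i₀, μ k * c k ^ 2 = ∑ k ∈ univ.erase i₀, μ k * w k ^ 2 :=
            Finset.sum_congr rfl (fun k hk => by rw [hcE k hk])
          have e2 : T = μ i₀ * w i₀ ^ 2 + ∑ k ∈ univ.erase i₀, μ k * w k ^ 2 := by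
            rw [← hQw]; exact hsplit _
          rw [e1, hci]
          linarith
        have hSc : ∑ k, ℓ k * c k = 0 := by
          rw [hsplit (fun k => ℓ k * c k)]
          have e1 : ∑ k ∈ univ.erase i₀, ℓ k * c k = ∑ k ∈ univ.erase i₀, ℓ k * w k :=
            Finset.sum_congr rfl (fun k hk => by rw [hcE k hk])
          have e2 : T = ℓ i₀ * w i₀ + ∑ k ∈ univ.erase i₀, ℓ k * w k := by
            rw [← hSw]; exact hsplit _
          rw [e1, hci]
          have : ℓ i₀ * (T / ℓ i₀) = T := mul_div_cancel₀ _ hβ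
          nlinarith [this, e2]
        have hw0 : w i₀ = ℓ i₀ / μ i₀ := rfl
        have hb2 : 0 < ℓ i₀ ^ 2 := lt_of_le_of_ne (sq_nonneg _) (Ne.symm (pow_ne_zero 2 hβ))
        have key2 : ℓ i₀ ^ 2 * (μ i₀ * (w i₀ - T / ℓ i₀) ^ 2 - μ i₀ * w i₀ ^ 2)
            = -2*T*ℓ i₀ ^ 2 + μ i₀ * T ^ 2 := by
          rw [hw0]
          field_simp [hμne i₀, hβ]
          ring
        rw [hQc, hSc] at h
        have h' : 0 < T + (μ i₀ * (w i₀ - T / ℓ i₀) ^ 2 - μ i₀ * w i₀ ^ 2) := by nlinarith [h]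
        have h'' := mul_pos hb2 h'
        rw [mul_add, key2] at h''
        nlinarith [mul_pos hT0 hb2, mul_nonpos_of_nonpos_of_nonneg hneg.le (sq_nonneg T)]
  · intro hT c hc
    set a := c i₀ with ha_def
    set β := ℓ i₀ with hβ_def
    set Q1 := ∑ j ∈ univ.erase i₀, μ j * c j ^ 2 with hQ_def
    set S1 := ∑ j ∈ univ.erase i₀, ℓ j * c j with hS_def
    set T1 := ∑ j ∈ univ.erase i₀, ℓ j ^ 2 / μ j with hT_def
    have hposE : ∀ j ∈ univ.erase i₀, 0 < μ j := fun j hj => hpos j (Finset.mem_erase.mp hj).1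
    have hQ0 : 0 ≤ Q1 :=
      Finset.sum_nonneg (fun j hj => mul_nonneg (hposE j hj).le (sq_nonneg _))
    have hT0 : 0 ≤ T1 :=
      Finset.sum_nonneg (fun j hj => div_nonneg (sq_nonneg _) (hposE j hj).le)
    have hCS : S1 ^ 2 ≤ T1 * Q1 := by
      have h := Finset.sum_mul_sq_le_sq_mul_sq (univ.erase i₀)
        (fun j => ℓ j / Real.sqrt (μ j)) (fun j => Real.sqrt (μ j) * c j)
      have e1 : ∑ j ∈ univ.erase i₀, (ℓ j / Real.sqrt (μ j)) * (Real.sqrt (μ j) * c j) = S1 := by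
        apply Finset.sum_congr rfl
        intro j hj
        have h1 : Real.sqrt (μ j) ≠ 0 := (Real.sqrt_pos.mpr (hposE j hj)).ne'
        field_simp
      have e2 : ∑ j ∈ univ.erase i₀, (ℓ j / Real.sqrt (μ j)) ^ 2 = T1 := by
        apply Finset.sum_congr rfl
        intro j hj
        rw [div_pow, Real.sq_sqrt (hposE j hj).le]
      have e3 : ∑ j ∈ univ.erase i₀, (Real.sqrt (μ j) * c j) ^ 2 = Q1 := by
        apply Finset.sum_congr rfl
        intro j hj
        rw [mul_pow, Real.sq_sqrt (hposE j hj).le]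
      rw [e1, e2, e3] at h
      exact h
    have hKey : (-(1/2) - T1) * μ i₀ < β ^ 2 := by
      have h1 : ∑ j, ℓ j ^ 2 / μ j = β ^ 2 / μ i₀ + T1 := hsplit _
      have h2 : β ^ 2 / μ i₀ < -(1/2) - T1 := by rw [h1] at hT; linarith
      exact (div_lt_iff_of_neg hneg).mp h2
    rw [hsplit (fun j => μ j * c j ^ 2), hsplit (fun j => ℓ j * c j),
      ← hQ_def, ← hS_def, ← ha_def, ← hβ_def]
    by_cases ha : a = 0
    · have hQpos : 0 < Q1 := by
        obtain ⟨j, hj⟩ := Function.ne_iff.mp hc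
        have hj' : c j ≠ 0 := by simpa using hj
        have hjne : j ≠ i₀ := by rintro rfl; exact hj' ha
        apply Finset.sum_pos' (fun k hk => mul_nonneg (hposE k hk).le (sq_nonneg _))
        exact ⟨j, Finset.mem_erase.mpr ⟨hjne, mem_univ j⟩,
          mul_pos (hpos j hjne) (lt_of_le_of_ne (sq_nonneg _) (Ne.symm (pow_ne_zero 2 hj')))⟩
      rw [ha]
      nlinarith [hQpos, sq_nonneg S1]
    · have ha2 : 0 < a ^ 2 := lt_of_le_of_ne (sq_nonneg a) (Ne.symm (pow_ne_zero 2 ha))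
      by_contra hG
      push_neg at hG
      have hD : Q1 ≤ -μ i₀ * a ^ 2 - 2 * (β * a + S1) ^ 2 := by nlinarith [hG]
      have hD0 : 0 ≤ -μ i₀ * a ^ 2 - 2 * (β * a + S1) ^ 2 := le_trans hQ0 hD
      have h3 : S1 ^ 2 ≤ T1 * (-μ i₀ * a ^ 2 - 2 * (β * a + S1) ^ 2) :=
        hCS.trans (mul_le_mul_of_nonneg_left hD hT0)
      rcases eq_or_lt_of_le hD0 with hEq | hLt
      · have hQz : Q1 = 0 := le_antisymm (by linarith) hQ0
        have hSz : S1 = 0 := by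
          have h4 : T1 * Q1 = 0 := by rw [hQz, mul_zero]
          have h5 : S1 ^ 2 = 0 := le_antisymm (by linarith [hCS]) (sq_nonneg _)
          exact pow_eq_zero_iff (by norm_num) |>.mp h5
        have h1 : μ i₀ * a ^ 2 = -2 * (β * a) ^ 2 := by
          rw [hSz] at hEq
          nlinarith [hEq]
        have h2 : (-(1/2) - T1) * μ i₀ * a ^ 2 < β ^ 2 * a ^ 2 := by nlinarith [hKey, ha2]
        have h4 : T1 * (μ i₀ * a ^ 2) = T1 * (-2 * (β * a) ^ 2) := by rw [h1]
        nlinarith [h1, h2, h4, mul_nonneg hT0 (sq_nonneg (β * a))]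
      · nlinarith [h3, hKey, hLt, sq_nonneg (2 * β * (β * a + S1) + μ i₀ * a), hneg, hT0]

open Matrix in
lemma dot_mulVec_left' {n : Type*} [Fintype n] (M : Matrix n n ℝ) (x z : n → ℝ) :
    (M *ᵥ x) ⬝ᵥ z = x ⬝ᵥ (Mᵀ *ᵥ z) := by
  rw [dotProduct_comm, dotProduct_mulVec, ← Matrix.mulVec_transpose,
    dotProduct_comm]

open Matrix in
lemma vecMulVec_mulVec' {n : Type*} [Fintype n] (L x : n → ℝ) :
    Matrix.vecMulVec L L *ᵥ x = (L ⬝ᵥ x) • L := by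
  funext i
  simp only [Matrix.mulVec, dotProduct, Matrix.vecMulVec_apply, Pi.smul_apply,
    smul_eq_mul]
  rw [Finset.sum_mul]
  exact Finset.sum_congr rfl fun j _ => by ring

open Matrix in
set_option maxHeartbeats 1600000 in
theorem stmt8 {d : ℕ} (V : Matrix (Fin d) (Fin d) ℝ) (hV : V.IsHermitian)
    (hdet : IsUnit V.det)
    (hneg : (Finset.univ.filter (fun i => hV.eigenvalues i < 0)).card = 1)
    (Lx Lv : Fin d → ℝ)
    (L : Fin d ⊕ Fin d → ℝ) (hL : L = Sum.elim Lx Lv)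
    (W : Matrix (Fin d ⊕ Fin d) (Fin d ⊕ Fin d) ℝ)
    (hW : W = Matrix.fromBlocks ((2:ℝ)⁻¹ • V) 0 0 ((2:ℝ)⁻¹ • 1)) :
    (W + Matrix.vecMulVec L L).PosDef ↔
      -(dotProduct (V⁻¹.mulVec Lx) Lx) - dotProduct Lv Lv > 1/2 := by
  subst hL hW
  classical
  set lam : Fin d → ℝ := hV.eigenvalues with hlam
  set U : Matrix (Fin d) (Fin d) ℝ := (hV.eigenvectorUnitary : Matrix (Fin d) (Fin d) ℝ)
    with hU
  have hstar : star U = Uᵀ := by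
    rw [Matrix.star_eq_conjTranspose, Matrix.conjTranspose_eq_transpose_of_trivial]
  have hUmem := hV.eigenvectorUnitary.prop
  have hU1 : Uᵀ * U = 1 := by rw [← hstar]; exact hUmem.1
  have hU2 : U * Uᵀ = 1 := by rw [← hstar]; exact hUmem.2
  have hspec : V = U * Matrix.diagonal lam * Uᵀ := by
    rw [← hstar]; exact hV.spectral_theorem
  have hlamne : ∀ i, lam i ≠ 0 := by
    have hdet2 : V.det = ∏ i, lam i := hV.det_eq_prod_eigenvalues
    intro i hi
    exact hdet.ne_zero (hdet2.trans (Finset.prod_eq_zero (Finset.mem_univ i) hi))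
  obtain ⟨i₀, hi₀⟩ := Finset.card_eq_one.mp hneg
  have hi₀neg : lam i₀ < 0 := by
    have h1 : i₀ ∈ Finset.univ.filter (fun i => hV.eigenvalues i < 0) :=
      hi₀ ▸ Finset.mem_singleton_self i₀
    simpa [hlam] using (Finset.mem_filter.mp h1).2
  have hipos : ∀ j, j ≠ i₀ → 0 < lam j := by
    intro j hj
    have h1 : j ∉ Finset.univ.filter (fun i => hV.eigenvalues i < 0) := by
      rw [hi₀]; simp [hj]
    have h2 : ¬ (lam j < 0) := by
      intro h3; exact h1 (Finset.mem_filter.mpr ⟨Finset.mem_univ j, h3⟩)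
    exact lt_of_le_of_ne (not_lt.mp h2) (Ne.symm (hlamne j))
  set m : Fin d → ℝ := Uᵀ *ᵥ Lx with hm
  -- Key A
  have keyA : ∀ y : Fin d → ℝ, (U *ᵥ y) ⬝ᵥ (V *ᵥ (U *ᵥ y)) = ∑ i, lam i * y i ^ 2 := by
    intro y
    rw [hspec, Matrix.mulVec_mulVec, dot_mulVec_left', Matrix.mulVec_mulVec]
    have e1 : Uᵀ * (U * Matrix.diagonal lam * Uᵀ * U) = Matrix.diagonal lam := by
      rw [mul_assoc (U * Matrix.diagonal lam) Uᵀ U, hU1, mul_one, ← mul_assoc, hU1, one_mul]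
    rw [e1]
    unfold dotProduct
    exact Finset.sum_congr rfl fun i _ => by rw [Matrix.mulVec_diagonal]; ring
  -- Key B
  have keyB : ∀ y : Fin d → ℝ, Lx ⬝ᵥ (U *ᵥ y) = m ⬝ᵥ y := by
    intro y
    rw [dotProduct_mulVec, ← Matrix.mulVec_transpose]
  -- Key C
  have keyC : (V⁻¹ *ᵥ Lx) ⬝ᵥ Lx = ∑ i, m i ^ 2 / lam i := by
    have hVz : V *ᵥ (U *ᵥ fun i => m i / lam i) = Lx := by
      rw [hspec, Matrix.mulVec_mulVec]
      have e1 : U * Matrix.diagonal lam * Uᵀ * U = U * Matrix.diagonal lam := by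
        rw [mul_assoc (U * Matrix.diagonal lam) Uᵀ U, hU1, mul_one]
      rw [e1, ← Matrix.mulVec_mulVec]
      have e2 : (Matrix.diagonal lam *ᵥ fun i => m i / lam i) = m := by
        funext i
        rw [Matrix.mulVec_diagonal]
        field_simp [hlamne i]
      rw [e2, hm, Matrix.mulVec_mulVec, hU2, Matrix.one_mulVec]
    have hinv : V⁻¹ *ᵥ Lx = U *ᵥ fun i => m i / lam i := by
      rw [← hVz, Matrix.mulVec_mulVec, Matrix.nonsing_inv_mul V hdet, Matrix.one_mulVec]
    rw [hinv, dot_mulVec_left']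
    unfold dotProduct
    exact Finset.sum_congr rfl fun i _ => by rw [← hm]; ring
  -- the quadratic form identity
  set μ : Fin d ⊕ Fin d → ℝ := Sum.elim lam (fun _ => 1) with hμ
  set ℓ : Fin d ⊕ Fin d → ℝ := Sum.elim m Lv with hℓ
  have hform : ∀ y v : Fin d → ℝ,
      (Sum.elim (U *ᵥ y) v) ⬝ᵥ
        ((Matrix.fromBlocks ((2:ℝ)⁻¹ • V) 0 0 ((2:ℝ)⁻¹ • 1)
          + Matrix.vecMulVec (Sum.elim Lx Lv) (Sum.elim Lx Lv)) *ᵥ (Sum.elim (U *ᵥ y) v))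
      = (∑ j, μ j * (Sum.elim y v) j ^ 2) / 2 + (∑ j, ℓ j * (Sum.elim y v) j) ^ 2 := by
    intro y v
    rw [Matrix.add_mulVec, dotProduct_add, vecMulVec_mulVec',
      dotProduct_smul, Matrix.fromBlocks_mulVec]
    simp only [Sum.elim_comp_inl, Sum.elim_comp_inr, Matrix.zero_mulVec, add_zero, zero_add,
      Matrix.smul_mulVec, Matrix.one_mulVec]
    rw [sumElim_dotProduct_sumElim, dotProduct_smul, dotProduct_smul,
      keyA y, sumElim_dotProduct_sumElim, keyB y]
    have e1 : ∑ j, μ j * (Sum.elim y v) j ^ 2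
        = (∑ i, lam i * y i ^ 2) + v ⬝ᵥ v := by
      rw [Fintype.sum_sum_type]
      simp only [hμ, Sum.elim_inl, Sum.elim_inr]
      unfold dotProduct
      congr 1
      exact Finset.sum_congr rfl fun i _ => by ring
    have e2 : ∑ j, ℓ j * (Sum.elim y v) j = m ⬝ᵥ y + Lv ⬝ᵥ v := by
      rw [Fintype.sum_sum_type]
      simp only [hℓ, Sum.elim_inl, Sum.elim_inr]
      rfl
    rw [e1, e2]
    have e3 : (Sum.elim (U *ᵥ y) v) ⬝ᵥ (Sum.elim Lx Lv)
        = m ⬝ᵥ y + Lv ⬝ᵥ v := by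
      rw [sumElim_dotProduct_sumElim, dotProduct_comm (U *ᵥ y) Lx, keyB y,
        dotProduct_comm v Lv]
    rw [e3]
    ring_nf
  -- sum identity
  have hsum : ∑ j, ℓ j ^ 2 / μ j = (V⁻¹ *ᵥ Lx) ⬝ᵥ Lx + Lv ⬝ᵥ Lv := by
    rw [Fintype.sum_sum_type]
    simp only [hμ, hℓ, Sum.elim_inl, Sum.elim_inr]
    rw [keyC]
    congr 1
    unfold dotProduct
    exact Finset.sum_congr rfl fun i _ => by ring
  -- diag_key instance
  have hdk := diag_key μ ℓ (Sum.inl i₀)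
    (by simpa [hμ] using hi₀neg)
    (by
      rintro (i | i) hj
      · exact hipos i (fun h => hj (by rw [h]))
      · norm_num [hμ])
  have hUinj : ∀ y : Fin d → ℝ, U *ᵥ y = 0 → y = 0 := by
    intro y hy
    have h1 := congrArg (fun z => Uᵀ *ᵥ z) hy
    simpa [Matrix.mulVec_mulVec, hU1, Matrix.one_mulVec, Matrix.mulVec_zero] using h1
  have hstarv : ∀ x : Fin d ⊕ Fin d → ℝ, star x = x := fun x => funext fun i => rfl
  constructor
  · intro hpd
    have hall : ∀ c : Fin d ⊕ Fin d → ℝ, c ≠ 0 →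
        0 < (∑ j, μ j * c j ^ 2) / 2 + (∑ j, ℓ j * c j) ^ 2 := by
      intro c hc
      have hxne : Sum.elim (U *ᵥ (c ∘ Sum.inl)) (c ∘ Sum.inr) ≠ 0 := by
        intro h0
        have h1 : U *ᵥ (c ∘ Sum.inl) = 0 := funext fun i => congrFun h0 (Sum.inl i)
        have h2 : c ∘ Sum.inr = 0 := funext fun i => congrFun h0 (Sum.inr i)
        have h3 : c ∘ Sum.inl = 0 := hUinj _ h1
        apply hc
        rw [← Sum.elim_comp_inl_inr c, h3, h2]
        funext j; cases j <;> rfl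
      have h4 := hpd.dotProduct_mulVec_pos hxne
      rw [hstarv] at h4
      rw [hform (c ∘ Sum.inl) (c ∘ Sum.inr), Sum.elim_comp_inl_inr c] at h4
      exact h4
    have h5 := hdk.mp hall
    rw [hsum] at h5
    linarith
  · intro htarget
    have h5 : ∑ j, ℓ j ^ 2 / μ j < -(1/2) := by rw [hsum]; linarith
    refine Matrix.PosDef.of_dotProduct_mulVec_pos ?_ ?_
    · apply Matrix.IsHermitian.add
      · rw [Matrix.IsHermitian, Matrix.conjTranspose_eq_transpose_of_trivial,
          Matrix.fromBlocks_transpose]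
        have hVt : Vᵀ = V := by
          rw [← Matrix.conjTranspose_eq_transpose_of_trivial]; exact hV
        rw [Matrix.transpose_smul, Matrix.transpose_smul, hVt, Matrix.transpose_zero,
          Matrix.transpose_one]
      · rw [Matrix.IsHermitian, Matrix.conjTranspose_eq_transpose_of_trivial]
        funext i j
        simp [Matrix.transpose_apply, Matrix.vecMulVec_apply, mul_comm]
    · intro x hx
      rw [hstarv]
      have hUy : U *ᵥ (Uᵀ *ᵥ (x ∘ Sum.inl)) = x ∘ Sum.inl := by
        rw [Matrix.mulVec_mulVec, hU2, Matrix.one_mulVec]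
      have hx' : x = Sum.elim (U *ᵥ (Uᵀ *ᵥ (x ∘ Sum.inl))) (x ∘ Sum.inr) := by
        rw [hUy]
        funext j; cases j <;> rfl
      have hcne : Sum.elim (Uᵀ *ᵥ (x ∘ Sum.inl)) (x ∘ Sum.inr) ≠ 0 := by
        intro h0
        have h1 : Uᵀ *ᵥ (x ∘ Sum.inl) = 0 := funext fun i => congrFun h0 (Sum.inl i)
        have h2 : x ∘ Sum.inr = 0 := funext fun i => congrFun h0 (Sum.inr i)
        apply hx
        have h3 : x ∘ Sum.inl = 0 := by rw [← hUy, h1, Matrix.mulVec_zero]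
        rw [← Sum.elim_comp_inl_inr x, h3, h2]
        funext j; cases j <;> rfl
      calc (0:ℝ) < _ := hdk.mpr h5 (Sum.elim (Uᵀ *ᵥ (x ∘ Sum.inl)) (x ∘ Sum.inr)) hcne
      _ = _ := by
        rw [← hform (Uᵀ *ᵥ (x ∘ Sum.inl)) (x ∘ Sum.inr)]
        rw [← hx']
end

section
/- Let ℓ_x, ℓ_v ∈ ℝ^d, y ∈ (0,1], and M_y = ((y+1)²/(4y))Id + ℓ_vℓ_vᵗ, u_y(x,v) = (ℓ_x·x) ℓ_v + ((y²-1)/(4y)) v. Then for all x, v ∈ ℝ^d: ℓ_xℓ_xᵗ x·x + ((y-1)²/(4y)) v² - M_y⁻¹ u_y(x,v) · u_y(x,v) = ((1+y) ℓ_x·x + (1-y) ℓ_v·v)² / (4y|ℓ_v|² + (y+1)²). -/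
open Matrix

lemma vecMulVec_mulVec'_s11 {d : ℕ} (a b x : Fin d → ℝ) :
    (Matrix.vecMulVec a b).mulVec x = (b ⬝ᵥ x) • a := by
  funext i
  simp only [Matrix.mulVec, dotProduct, Matrix.vecMulVec_apply,
    Pi.smul_apply, smul_eq_mul, Finset.sum_mul]
  exact Finset.sum_congr rfl fun k _ => by ring

lemma vecMulVec_mul_self' {d : ℕ} (a : Fin d → ℝ) :
    Matrix.vecMulVec a a * Matrix.vecMulVec a a = (a ⬝ᵥ a) • Matrix.vecMulVec a a := by
  ext i j
  simp only [Matrix.mul_apply, Matrix.vecMulVec_apply, Matrix.smul_apply,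
    dotProduct, smul_eq_mul]
  rw [Finset.sum_mul]
  exact Finset.sum_congr rfl fun k _ => by ring

theorem stmt11 {d : ℕ} (ℓx ℓv : Fin d → ℝ) (y : ℝ) (hy : y ∈ Set.Ioc (0:ℝ) 1)
    (M : Matrix (Fin d) (Fin d) ℝ)
    (hM : M = ((y+1)^2/(4*y)) • (1 : Matrix (Fin d) (Fin d) ℝ) + Matrix.vecMulVec ℓv ℓv)
    (u : (Fin d → ℝ) → (Fin d → ℝ) → Fin d → ℝ)
    (hu : ∀ x v, u x v = (dotProduct ℓx x) • ℓv + ((y^2-1)/(4*y)) • v) :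
    ∀ x v : Fin d → ℝ,
      dotProduct ((Matrix.vecMulVec ℓx ℓx).mulVec x) x
        + ((y-1)^2/(4*y)) * dotProduct v v
        - dotProduct (M⁻¹.mulVec (u x v)) (u x v)
      = ((1+y) * dotProduct ℓx x + (1-y) * dotProduct ℓv v)^2
          / (4*y*dotProduct ℓv ℓv + (y+1)^2) := by
  obtain ⟨hy0, hy1⟩ := hy
  set α : ℝ := (y+1)^2/(4*y) with hα
  set s : ℝ := ℓv ⬝ᵥ ℓv with hs
  have hs0 : 0 ≤ s := Finset.sum_nonneg fun i _ => mul_self_nonneg _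
  have hαpos : 0 < α := by positivity
  have hα0 : α ≠ 0 := ne_of_gt hαpos
  have hαs : α + s ≠ 0 := by positivity
  set P : Matrix (Fin d) (Fin d) ℝ := Matrix.vecMulVec ℓv ℓv with hP
  set N : Matrix (Fin d) (Fin d) ℝ :=
    α⁻¹ • (1 : Matrix (Fin d) (Fin d) ℝ) - (α⁻¹ * (α+s)⁻¹) • P with hN
  have hPP : P * P = s • P := vecMulVec_mul_self' ℓv
  have h1 : M * N = 1 := by
    rw [hM, hN, add_mul, Matrix.smul_mul, one_mul, mul_sub, Matrix.mul_smul, Matrix.mul_smul,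
      mul_one, hPP]
    match_scalars <;> (field_simp; try ring)
  have hMinv : M⁻¹ = N := Matrix.inv_eq_right_inv h1
  intro x v
  set a : ℝ := ℓx ⬝ᵥ x with ha
  set b : ℝ := ℓv ⬝ᵥ v with hb
  set t : ℝ := v ⬝ᵥ v with ht
  set β : ℝ := (y^2-1)/(4*y) with hβ
  have hPu : ∀ z : Fin d → ℝ, P.mulVec z = (ℓv ⬝ᵥ z) • ℓv := fun z => vecMulVec_mulVec'_s11 ℓv ℓv z
  have hlvu : ℓv ⬝ᵥ (u x v) = a * s + β * b := by
    rw [hu]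
    simp only [dotProduct_add, dotProduct_smul, smul_eq_mul]
    rfl
  have huu : (u x v) ⬝ᵥ (u x v) = a * a * s + 2 * a * β * b + β * β * t := by
    rw [hu]
    simp only [dotProduct_add, add_dotProduct, dotProduct_smul,
      smul_dotProduct, smul_eq_mul, dotProduct_comm v ℓv]
    try rw [← hs]
    try rw [← hb]
    try rw [← ht]
    ring
  have hNu : (M⁻¹.mulVec (u x v)) ⬝ᵥ (u x v)
      = α⁻¹ * ((u x v) ⬝ᵥ (u x v)) - (α⁻¹ * (α+s)⁻¹) * (ℓv ⬝ᵥ (u x v)) * (ℓv ⬝ᵥ (u x v)) := by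
    rw [hMinv, hN, Matrix.sub_mulVec, Matrix.smul_mulVec, Matrix.smul_mulVec,
      Matrix.one_mulVec, hPu]
    simp [sub_dotProduct, smul_dotProduct, smul_eq_mul]
    ring
  have hxx : (Matrix.vecMulVec ℓx ℓx).mulVec x ⬝ᵥ x = a * a := by
    rw [vecMulVec_mulVec'_s11 ℓx ℓx x]
    simp [smul_dotProduct, smul_eq_mul, ha]
  rw [hxx, hNu, huu, hlvu, hβ, hα]
  have hden : 4*y*s + (y+1)^2 ≠ 0 := by positivity
  have h4y : (4:ℝ)*y ≠ 0 := by positivity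
  have h2 : (y+1)^2/(4*y) + s ≠ 0 := hαs
  field_simp
  ring
end

section
/- Let m̌(μ) = 2∫₀¹ (y+1)^{d-2} e^{-yμ} dy for μ ≥ 0 and d ≥ 1. Then for every k ∈ ℕ there exists C_k > 0 such that |m̌^{(k)}(μ)| ≤ C_k (1+μ)^{-(k+1)} for all μ ≥ 0. -/
open MeasureTheory Set Real intervalIntegral

private lemma zb19 {x : ℝ} (hx1 : 1 ≤ x) (hx2 : x ≤ 2) (d : ℕ) :
    |x ^ ((d:ℤ)-2)| ≤ 2 ^ d := by
  rw [abs_of_nonneg (zpow_nonneg (by linarith) _)]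
  calc x ^ ((d:ℤ)-2) ≤ x ^ (d:ℤ) := zpow_le_zpow_right₀ hx1 (by omega)
    _ = x ^ d := zpow_natCast x d
    _ ≤ 2 ^ d := pow_le_pow_left₀ (by linarith) hx2 d

private lemma cont19 (d k : ℕ) (μ : ℝ) :
    ContinuousOn (fun y : ℝ => (-y)^k * (y+1)^((d:ℤ)-2) * Real.exp (-y*μ)) (Set.uIcc 0 1) := by
  apply ContinuousOn.mul
  · apply ContinuousOn.mul
    · exact (continuousOn_id.neg.pow k)
    · refine ContinuousOn.zpow₀ (by fun_prop) _ fun y hy => Or.inl ?_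
      rw [Set.uIcc_of_le (by norm_num : (0:ℝ) ≤ 1)] at hy
      have := hy.1
      intro h; linarith [h]
  · fun_prop

private lemma intInt19 (d k : ℕ) (μ : ℝ) :
    IntervalIntegrable (fun y : ℝ => (-y)^k * (y+1)^((d:ℤ)-2) * Real.exp (-y*μ))
      MeasureTheory.volume 0 1 :=
  (cont19 d k μ).intervalIntegrable

private lemma hasD19 (d k : ℕ) (μ₀ : ℝ) :
    HasDerivAt (fun μ => ∫ y in (0:ℝ)..1, (-y)^k * (y+1)^((d:ℤ)-2) * Real.exp (-y*μ))
      (∫ y in (0:ℝ)..1, (-y)^(k+1) * (y+1)^((d:ℤ)-2) * Real.exp (-y*μ₀)) μ₀ := by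
  have h := intervalIntegral.hasDerivAt_integral_of_dominated_loc_of_deriv_le
    (F := fun (μ : ℝ) (y : ℝ) => (-y)^k * (y+1)^((d:ℤ)-2) * Real.exp (-y*μ))
    (F' := fun (μ : ℝ) (y : ℝ) => (-y)^(k+1) * (y+1)^((d:ℤ)-2) * Real.exp (-y*μ))
    (bound := fun _ => 2^d * Real.exp (|μ₀|+1)) (μ := MeasureTheory.volume)
    (a := 0) (b := 1) (x₀ := μ₀) (s := Metric.ball μ₀ 1) (Metric.ball_mem_nhds μ₀ one_pos)
    ?_ ?_ ?_ ?_ ?_ ?_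
  · exact h.2
  · filter_upwards with x
    exact ((cont19 d k x).mono (by rw [Set.uIoc_of_le (by norm_num : (0:ℝ) ≤ 1), Set.uIcc_of_le (by norm_num : (0:ℝ) ≤ 1)]; exact Set.Ioc_subset_Icc_self)).aestronglyMeasurable measurableSet_uIoc
  · exact intInt19 d k μ₀
  · exact ((cont19 d (k+1) μ₀).mono (by rw [Set.uIoc_of_le (by norm_num : (0:ℝ) ≤ 1), Set.uIcc_of_le (by norm_num : (0:ℝ) ≤ 1)]; exact Set.Ioc_subset_Icc_self)).aestronglyMeasurable measurableSet_uIoc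
  · filter_upwards with t ht x hx
    rw [Set.uIoc_of_le (by norm_num : (0:ℝ) ≤ 1)] at ht
    have h1 : |(-t)^(k+1)| ≤ 1 := by
      rw [abs_pow]
      exact pow_le_one₀ (abs_nonneg _) (by rw [abs_neg, abs_of_pos ht.1]; exact ht.2)
    have h2 : |(t+1) ^ ((d:ℤ)-2)| ≤ 2^d := zb19 (by linarith [ht.1]) (by linarith [ht.2]) d
    have hxb : |x| ≤ |μ₀| + 1 := by
      have hd := mem_ball_iff_norm.mp hx
      rw [Real.norm_eq_abs] at hd
      calc |x| = |(x - μ₀) + μ₀| := by ring_nf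
        _ ≤ |x - μ₀| + |μ₀| := abs_add_le _ _
        _ ≤ |μ₀| + 1 := by linarith
    have h3 : Real.exp (-t*x) ≤ Real.exp (|μ₀|+1) := by
      apply Real.exp_le_exp.2
      calc -t*x ≤ |(-t*x)| := le_abs_self _
        _ = |t| * |x| := by rw [show -t*x = -(t*x) by ring, abs_neg, abs_mul]
        _ ≤ 1 * (|μ₀|+1) := by
            apply mul_le_mul _ hxb (abs_nonneg _) zero_le_one
            rw [abs_of_pos ht.1]; exact ht.2
        _ = |μ₀|+1 := one_mul _
    rw [Real.norm_eq_abs, abs_mul, abs_mul, abs_of_pos (Real.exp_pos _)]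
    calc |(-t)^(k+1)| * |(t+1)^((d:ℤ)-2)| * Real.exp (-t*x)
        ≤ 1 * 2^d * Real.exp (|μ₀|+1) := by
          apply mul_le_mul _ h3 (Real.exp_pos _).le (by positivity)
          exact mul_le_mul h1 h2 (abs_nonneg _) zero_le_one
      _ = 2^d * Real.exp (|μ₀|+1) := by ring
  · exact intervalIntegrable_const
  · filter_upwards with t ht x hx
    have base : HasDerivAt (fun μ : ℝ => Real.exp (-t*μ)) (Real.exp (-t*x) * (-t*1)) x :=
      (((hasDerivAt_id x).const_mul (-t)).exp)
    have := base.const_mul ((-t)^k * (t+1)^((d:ℤ)-2))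
    convert this using 1
    · rfl
    ring

private lemma decay19 (d k : ℕ) (μ : ℝ) (hμ : 0 ≤ μ) :
    |∫ y in (0:ℝ)..1, (-y)^k * (y+1)^((d:ℤ)-2) * Real.exp (-y*μ)|
      ≤ (2^d * 2^(k+1) * ((k.factorial : ℝ)+1)) * (1+μ)^(-((k:ℤ)+1)) := by
  have hOneμ : (0:ℝ) < 1 + μ := by linarith
  have hzpow : (1+μ)^(-((k:ℤ)+1)) = ((1+μ)^(k+1))⁻¹ := by
    rw [show -((k:ℤ)+1) = -((k+1 : ℕ) : ℤ) by push_cast; ring, zpow_neg, zpow_natCast]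
  -- positivity of the simple integral
  have hIc : IntervalIntegrable (fun y : ℝ => y^k * Real.exp (-y*μ)) MeasureTheory.volume 0 1 := by
    apply Continuous.intervalIntegrable; fun_prop
  have hI0 : 0 ≤ ∫ y in (0:ℝ)..1, y^k * Real.exp (-y*μ) := by
    apply intervalIntegral.integral_nonneg (by norm_num)
    intro y hy
    exact mul_nonneg (pow_nonneg hy.1 _) (Real.exp_pos _).le
  -- step 1: bound by 2^d times the simple integral
  have step1 : |∫ y in (0:ℝ)..1, (-y)^k * (y+1)^((d:ℤ)-2) * Real.exp (-y*μ)|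
      ≤ 2^d * ∫ y in (0:ℝ)..1, y^k * Real.exp (-y*μ) := by
    calc |∫ y in (0:ℝ)..1, (-y)^k * (y+1)^((d:ℤ)-2) * Real.exp (-y*μ)|
        ≤ ∫ y in (0:ℝ)..1, |(-y)^k * (y+1)^((d:ℤ)-2) * Real.exp (-y*μ)| :=
          intervalIntegral.abs_integral_le_integral_abs (by norm_num)
      _ ≤ ∫ y in (0:ℝ)..1, 2^d * (y^k * Real.exp (-y*μ)) := by
          apply intervalIntegral.integral_mono_on (by norm_num) (intInt19 d k μ).abs
            (hIc.const_mul _)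
          intro y hy
          rw [abs_mul, abs_mul, abs_pow, abs_neg, abs_of_nonneg hy.1,
            abs_of_pos (Real.exp_pos _)]
          rw [show (2:ℝ)^d * (y^k * Real.exp (-y*μ)) = y^k * 2^d * Real.exp (-y*μ) by ring]
          apply mul_le_mul_of_nonneg_right _ (Real.exp_pos _).le
          apply mul_le_mul_of_nonneg_left _ (pow_nonneg hy.1 k)
          exact zb19 (by linarith [hy.1]) (by linarith [hy.2]) d
      _ = 2^d * ∫ y in (0:ℝ)..1, y^k * Real.exp (-y*μ) := by
          rw [← intervalIntegral.integral_const_mul]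
  -- step 2: bound the simple integral
  have step2 : (∫ y in (0:ℝ)..1, y^k * Real.exp (-y*μ))
      ≤ 2^(k+1) * ((k.factorial : ℝ)+1) * ((1+μ)^(k+1))⁻¹ := by
    rcases le_or_gt μ 1 with hμ1 | hμ1
    · have hI1 : (∫ y in (0:ℝ)..1, y^k * Real.exp (-y*μ)) ≤ 1 := by
        calc (∫ y in (0:ℝ)..1, y^k * Real.exp (-y*μ))
            ≤ ∫ _y in (0:ℝ)..1, (1:ℝ) := by
              apply intervalIntegral.integral_mono_on (by norm_num) hIc
                intervalIntegrable_const
              intro y hy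
              have h1 : y^k ≤ 1 := pow_le_one₀ hy.1 hy.2
              have h2 : Real.exp (-y*μ) ≤ 1 :=
                Real.exp_le_one_iff.2 (by nlinarith [hy.1, hy.2])
              nlinarith [Real.exp_pos (-y*μ), pow_nonneg hy.1 k]
          _ = 1 := by simp
      have hp : (1+μ)^(k+1) ≤ 2^(k+1) := pow_le_pow_left₀ (by linarith) (by linarith) _
      have hp0 : (0:ℝ) < (1+μ)^(k+1) := pow_pos hOneμ _
      rw [← div_eq_mul_inv, le_div_iff₀ hp0]
      have hf0 : (0:ℝ) ≤ (k.factorial : ℝ) := Nat.cast_nonneg _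
      have h2p : (0:ℝ) ≤ 2^(k+1) := by positivity
      nlinarith [mul_le_mul hI1 hp hp0.le zero_le_one]
    · have hμ0 : (0:ℝ) < μ := by linarith
      -- compare with the full Gamma integral
      have hval : (∫ t in Set.Ioi (0:ℝ), t^k * Real.exp (-t*μ)) = (1/μ)^(k+1) * (k.factorial : ℝ) := by
        have := Real.integral_rpow_mul_exp_neg_mul_Ioi
          (a := ((k:ℝ)+1)) (r := μ) (by positivity) hμ0
        rw [show ((k:ℝ)+1) = ((k+1 : ℕ) : ℝ) by push_cast; ring] at this
        rw [Real.rpow_natCast] at this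
        rw [show ((k+1:ℕ):ℝ) = (k:ℝ)+1 from by push_cast; ring] at this
        rw [Real.Gamma_nat_eq_factorial] at this
        rw [← this]
        apply setIntegral_congr_fun measurableSet_Ioi
        intro t ht
        rw [show (k:ℝ)+1 - 1 = ((k:ℕ):ℝ) by push_cast; ring]
        simp only [Real.rpow_natCast]
        congr 1
        rw [show -t*μ = -(μ*t) by ring]
      have hint : MeasureTheory.IntegrableOn (fun t : ℝ => t^k * Real.exp (-t*μ)) (Set.Ioi 0) := by
        apply MeasureTheory.Integrable.mono' (Real.GammaIntegral_convergent
          (s := (k:ℝ)+1) (by positivity))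
        · exact (Continuous.aestronglyMeasurable (by fun_prop))
        · filter_upwards [MeasureTheory.ae_restrict_mem measurableSet_Ioi] with t ht
          rw [Real.norm_eq_abs, abs_mul, abs_pow, abs_of_pos ht, abs_of_pos (Real.exp_pos _)]
          rw [show ((k:ℝ)+1) - 1 = ((k:ℕ):ℝ) by push_cast; ring, Real.rpow_natCast]
          rw [mul_comm (Real.exp (-t))]
          apply mul_le_mul_of_nonneg_left _ (pow_nonneg ht.le k)
          apply Real.exp_le_exp.2
          nlinarith [(mem_Ioi.mp ht).le]
      have key : (∫ y in (0:ℝ)..1, y^k * Real.exp (-y*μ)) ≤ (k.factorial : ℝ) / μ^(k+1) := by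
        rw [intervalIntegral.integral_of_le (by norm_num : (0:ℝ) ≤ 1)]
        calc (∫ y in Set.Ioc (0:ℝ) 1, y^k * Real.exp (-y*μ))
            ≤ ∫ t in Set.Ioi (0:ℝ), t^k * Real.exp (-t*μ) := by
              apply MeasureTheory.setIntegral_mono_set hint
              · filter_upwards [MeasureTheory.ae_restrict_mem measurableSet_Ioi] with t ht
                exact mul_nonneg (pow_nonneg (le_of_lt ht) _) (Real.exp_pos _).le
              · exact HasSubset.Subset.eventuallyLE Set.Ioc_subset_Ioi_self
          _ = (k.factorial : ℝ) / μ^(k+1) := by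
              rw [hval]; rw [div_pow, one_pow]; ring
      have hA : (1+μ)^(k+1) ≤ 2^(k+1) * μ^(k+1) := by
        rw [← mul_pow]
        exact pow_le_pow_left₀ (by linarith) (by linarith) _
      have hμp : (0:ℝ) < μ^(k+1) := pow_pos hμ0 _
      have hOp : (0:ℝ) < (1+μ)^(k+1) := pow_pos hOneμ _
      calc (∫ y in (0:ℝ)..1, y^k * Real.exp (-y*μ)) ≤ (k.factorial : ℝ) / μ^(k+1) := key
        _ ≤ 2^(k+1) * ((k.factorial : ℝ)+1) * ((1+μ)^(k+1))⁻¹ := by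
            rw [← div_eq_mul_inv, div_le_div_iff₀ hμp hOp]
            have hf0 : (0:ℝ) ≤ (k.factorial : ℝ) := Nat.cast_nonneg _
            nlinarith [mul_le_mul_of_nonneg_left hA hf0, hμp.le,
              mul_nonneg (by positivity : (0:ℝ) ≤ (2:ℝ)^(k+1)) hμp.le]
  rw [hzpow]
  calc |∫ y in (0:ℝ)..1, (-y)^k * (y+1)^((d:ℤ)-2) * Real.exp (-y*μ)|
      ≤ 2^d * ∫ y in (0:ℝ)..1, y^k * Real.exp (-y*μ) := step1
    _ ≤ 2^d * (2^(k+1) * ((k.factorial : ℝ)+1) * ((1+μ)^(k+1))⁻¹) :=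
        mul_le_mul_of_nonneg_left step2 (by positivity)
    _ = (2^d * 2^(k+1) * ((k.factorial : ℝ)+1)) * ((1+μ)^(k+1))⁻¹ := by ring

theorem stmt19 {d : ℕ} (hd : 1 ≤ d)
    (m : ℝ → ℝ)
    (hm : ∀ μ : ℝ, m μ = 2 * ∫ y in (0:ℝ)..1, (y+1)^((d:ℤ)-2) * Real.exp (-y*μ)) :
    ∀ k : ℕ, ∃ C > 0, ∀ μ ≥ (0:ℝ), |iteratedDeriv k m μ| ≤ C * (1+μ)^(-((k:ℤ)+1)) := by
  have hiter : ∀ k : ℕ, ∀ μ : ℝ, iteratedDeriv k m μ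
      = 2 * ∫ y in (0:ℝ)..1, (-y)^k * (y+1)^((d:ℤ)-2) * Real.exp (-y*μ) := by
    intro k
    induction k with
    | zero =>
      intro μ
      rw [iteratedDeriv_zero, hm μ]
      congr 1
      apply intervalIntegral.integral_congr
      intro y _
      simp
    | succ n ih =>
      intro μ
      rw [iteratedDeriv_succ]
      have heq : iteratedDeriv n m
          = fun μ => 2 * ∫ y in (0:ℝ)..1, (-y)^n * (y+1)^((d:ℤ)-2) * Real.exp (-y*μ) :=
        funext ih
      rw [heq]
      exact ((hasD19 d n μ).const_mul 2).deriv
  intro k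
  refine ⟨2 * (2^d * 2^(k+1) * ((k.factorial : ℝ)+1)), by positivity, ?_⟩
  intro μ hμ
  rw [hiter k μ, abs_mul, abs_two, mul_assoc]
  exact mul_le_mul_of_nonneg_left (decay19 d k μ hμ) (by norm_num)
end
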